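/- With the notation and hypotheses (i)–(iv) of the context, assume dim W ≥ 1, and define σ_W : W × W → W by σ_W(X,Y) := P_W(σ(X,Y)), where P_W is the orthogonal projection of E onto W. Then: (a) for any orthonormal basis (f_j) of W, Σ_j σ_W(f_j, f_j) = 0; and (b) for all X, Y, Z ∈ W, σ_W(X, σ_W(Y,Z)) − σ_W(Y, σ_W(X,Z)) = ((n+1)·L₁/r) · (⟨Y,Z⟩·X − ⟨X,Z⟩·Y). -/

import Mathlib

open scoped RealInnerProductSpace

/-- The trace of an endomorphism of a real inner product space, computed via an
orthonormal basis. -/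
lemma trace_eq_sum_inner_onb {F : Type*} [NormedAddCommGroup F] [InnerProductSpace ℝ F]
    [FiniteDimensional ℝ F] {ι : Type*} [Fintype ι] [DecidableEq ι]
    (b : OrthonormalBasis ι ℝ F) (T : F →ₗ[ℝ] F) :
    LinearMap.trace ℝ F T = ∑ i, ⟪T (b i), b i⟫ := by
  rw [LinearMap.trace_eq_matrix_trace ℝ b.toBasis, Matrix.trace]
  refine Finset.sum_congr rfl fun i _ => ?_
  rw [Matrix.diag_apply, LinearMap.toMatrix_apply, OrthonormalBasis.coe_toBasis_repr_apply,
    OrthonormalBasis.repr_apply_apply, OrthonormalBasis.coe_toBasis, real_inner_comm]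

set_option maxHeartbeats 2000000 in
/-- Auxiliary version of Lemma 3.2 with the subspaces as opaque hypotheses. -/
private theorem sigma_W_aux
    {E : Type*} [NormedAddCommGroup E] [InnerProductSpace ℝ E]
    [FiniteDimensional ℝ E]
    (s : ℕ) (hs : 1 ≤ s) (L₁ : ℝ) (hL : L₁ < 0)
    (nn : Fin s → ℕ) (hnn : ∀ α, 0 < nn α)
    (H : Fin s → E) (hind : LinearIndependent ℝ H)
    (hHL : ∀ α β, α ≠ β → ⟪H α, H β⟫ = L₁)
    (σ : E →ₗ[ℝ] E →ₗ[ℝ] E)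
    (hsymm : ∀ X Y : E, σ X Y = σ Y X)
    (htri : ∀ X Y Z : E, ⟪σ X Y, Z⟫ = ⟪σ X Z, Y⟫)
    (hii : ∀ (X : E) (α : Fin s), σ X (H α) = ⟪X, H α⟫ • H α + L₁ • X)
    (hiii : ∀ X Y Z : E, σ X (σ Y Z) - σ Y (σ X Z) =
      L₁ • (⟪Y, Z⟫ • X - ⟪X, Z⟫ • Y))
    (b : OrthonormalBasis (Fin (Module.finrank ℝ E)) ℝ E)
    (hiv : ∑ i, σ (b i) (b i) = -∑ α, (nn α : ℝ) • H α)
    (K : Submodule ℝ E) (hKdef : K = Submodule.span ℝ (Set.range H))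
    (W : Submodule ℝ E) (hWdef : W = Kᗮ)
    (hW : 1 ≤ Module.finrank ℝ W) :
    (∀ (ι : Type) (_ : Fintype ι)
        (f : OrthonormalBasis ι ℝ W),
      ∑ j, Submodule.orthogonalProjection W (σ (f j : E) (f j : E)) = 0) ∧
    (∀ X Y Z : E, X ∈ W → Y ∈ W → Z ∈ W →
      (Submodule.orthogonalProjection W (σ X ((Submodule.orthogonalProjection W (σ Y Z) : E))) : E) -
      (Submodule.orthogonalProjection W (σ Y ((Submodule.orthogonalProjection W (σ X Z) : E))) : E) =
        ((((Module.finrank ℝ E + ∑ α, nn α : ℕ) : ℝ) + 1) * L₁ /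
            ((Module.finrank ℝ W : ℝ) + 1)) •
          (⟪Y, Z⟫ • X - ⟪X, Z⟫ • Y)) := by
  classical
  have hL0 : L₁ ≠ 0 := ne_of_lt hL
  have hHK : ∀ α, H α ∈ K := by
    intro α; rw [hKdef]; exact Submodule.subset_span ⟨α, rfl⟩
  have hWK : Wᗮ = K := by
    rw [hWdef]; exact Submodule.orthogonal_orthogonal K
  have hWH : ∀ {X : E}, X ∈ W → ∀ α, ⟪X, H α⟫ = 0 := by
    intro X hX α
    rw [real_inner_comm]
    rw [hWdef] at hX
    exact Submodule.inner_right_of_mem_orthogonal (hHK α) hX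
  have hσK : ∀ X ∈ W, ∀ h ∈ K, σ X h ∈ W := by
    intro X hX h hh
    rw [hKdef] at hh
    induction hh using Submodule.span_induction with
    | mem x hx =>
        obtain ⟨α, rfl⟩ := hx
        rw [hii, hWH hX, zero_smul, zero_add]
        exact W.smul_mem _ hX
    | zero => rw [map_zero]; exact W.zero_mem
    | add x y _ _ h1 h2 => rw [map_add]; exact W.add_mem h1 h2
    | smul a x _ h1 => rw [map_smul]; exact W.smul_mem _ h1
  have hmR : ∃ mR : ℝ, mR = (Module.finrank ℝ E : ℝ) := ⟨_, rfl⟩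
  obtain ⟨mR, hmR⟩ := hmR
  have hNR : ∃ NR : ℝ, NR = ∑ α, (nn α : ℝ) := ⟨_, rfl⟩
  obtain ⟨NR, hNR⟩ := hNR
  have hrdef : ∃ r : ℝ, r = (Module.finrank ℝ W : ℝ) + 1 := ⟨_, rfl⟩
  obtain ⟨r, hrdef⟩ := hrdef
  have hr0 : (0:ℝ) < r := by rw [hrdef]; positivity
  have hrank : (Module.finrank ℝ W : ℝ) = mR - s := by
    have h1 := Submodule.finrank_add_finrank_orthogonal K
    have h2 : Module.finrank ℝ K = s := by
      rw [hKdef, finrank_span_eq_card hind, Fintype.card_fin]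
    rw [h2] at h1
    rw [hmR, ← h1, hWdef]
    push_cast
    ring
  -- norms of the `H β`
  have hnorm : ∀ β, ((nn β : ℝ) + 1) * ⟪H β, H β⟫ = -L₁ * (mR + NR - nn β) := by
    intro β
    have e1 : ∑ i, ⟪σ (b i) (b i), H β⟫ = ⟪H β, H β⟫ + mR * L₁ := by
      have t1 : ∀ i, ⟪σ (b i) (b i), H β⟫
          = ⟪H β, b i⟫ * ⟪b i, H β⟫ + L₁ * ⟪b i, b i⟫ := by
        intro i
        rw [htri, hii, inner_add_left, real_inner_smul_left, real_inner_smul_left]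
        rw [real_inner_comm (b i) (H β)]
      have t2 : ∀ i, ⟪b i, b i⟫ = (1:ℝ) := by
        intro i
        rw [real_inner_self_eq_norm_mul_norm, b.orthonormal.1 i, one_mul]
      simp only [t1, t2, mul_one]
      rw [Finset.sum_add_distrib, b.sum_inner_mul_inner, Finset.sum_const,
        Finset.card_univ, Fintype.card_fin, nsmul_eq_mul, ← hmR]
    have e2 : ∑ i, ⟪σ (b i) (b i), H β⟫
        = -(∑ α, (nn α : ℝ) * ⟪H α, H β⟫) := by
      rw [← sum_inner, hiv]
      simp [sum_inner, real_inner_smul_left]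
    have e3 : ∑ α, (nn α : ℝ) * ⟪H α, H β⟫
        = NR * L₁ + (nn β : ℝ) * (⟪H β, H β⟫ - L₁) := by
      have t3 : ∑ α, ((nn α : ℝ) * ⟪H α, H β⟫ - (nn α : ℝ) * L₁)
          = (nn β : ℝ) * (⟪H β, H β⟫ - L₁) := by
        rw [Finset.sum_eq_single β]
        · ring
        · intro α _ hαβ
          rw [hHL α β hαβ]; ring
        · intro h; exact absurd (Finset.mem_univ β) h
      have t4 : ∑ α, ((nn α : ℝ) * L₁) = NR * L₁ := by
        rw [hNR, Finset.sum_mul]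
      rw [Finset.sum_sub_distrib, t4] at t3
      linarith
    rw [e2, e3] at e1
    linarith
  -- the mean curvature direction `u` inside `K`
  obtain ⟨c, hc⟩ : ∃ c : Fin s → ℝ, c = fun α => -((nn α : ℝ) + 1) / (L₁ * r) := ⟨_, rfl⟩
  obtain ⟨u, hu_def⟩ : ∃ u : E, u = ∑ α, c α • H α := ⟨_, rfl⟩
  have huK : u ∈ K := by
    rw [hu_def]; exact Submodule.sum_mem _ fun α _ => K.smul_mem _ (hHK α)
  have hcsum : (∑ α, c α) * L₁ = -(NR + s) / r := by
    rw [Finset.sum_mul]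
    have h5 : ∀ α ∈ Finset.univ, c α * L₁ = -((nn α : ℝ) + 1) / r := by
      intro α _
      rw [hc]
      field_simp
    rw [Finset.sum_congr rfl h5]
    have h6 : ∑ α : Fin s, -((nn α : ℝ) + 1) / r = -(NR + s)/r := by
      rw [hNR, ← Finset.sum_div]
      congr 1
      rw [Finset.sum_neg_distrib, Finset.sum_add_distrib, Finset.sum_const,
        Finset.card_univ, Fintype.card_fin, nsmul_eq_mul, mul_one]
    rw [h6]
  have hu : ∀ β, ⟪u, H β⟫ = 1 := by
    intro β
    have e1 : ⟪u, H β⟫ = ∑ α, c α * ⟪H α, H β⟫ := by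
      rw [hu_def, sum_inner]
      simp [real_inner_smul_left]
    have e2 : ∑ α, (c α * ⟪H α, H β⟫ - c α * L₁) = c β * (⟪H β, H β⟫ - L₁) := by
      rw [Finset.sum_eq_single β]
      · ring
      · intro α _ hαβ; rw [hHL α β hαβ]; ring
      · intro h; exact absurd (Finset.mem_univ β) h
    have e3 : c β * (⟪H β, H β⟫ - L₁) = (mR + NR + 1) / r := by
      have h1 := hnorm β
      have hnb : ((nn β : ℝ) + 1) ≠ 0 := by positivity
      rw [hc]
      have h2 : ⟪H β, H β⟫ = -L₁ * (mR + NR - nn β) / ((nn β : ℝ) + 1) := by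
        field_simp
        linarith
      rw [h2]
      field_simp
      ring
    rw [Finset.sum_sub_distrib] at e2
    have e4 : ∑ α, c α * L₁ = -(NR + s)/r := by rw [← Finset.sum_mul]; exact hcsum
    have e5 : ⟪u, H β⟫ = (mR + NR + 1)/r + (-(NR + s)/r) := by
      rw [e1]; rw [← e3]; rw [← e4]; linarith
    rw [e5, ← add_div]
    have e6 : mR + NR + 1 + -(NR + s) = r := by rw [hrdef, hrank]; ring
    rw [e6, div_self (ne_of_gt hr0)]
  have hσu : ∀ X ∈ W, σ X u = (-(NR + s) / r) • X := by
    intro X hX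
    rw [hu_def, map_sum]
    have h7 : ∀ α ∈ Finset.univ, σ X (c α • H α) = (c α * L₁) • X := by
      intro α _
      rw [map_smul, hii, hWH hX, zero_smul, zero_add, smul_smul]
    rw [Finset.sum_congr rfl h7, ← Finset.sum_smul, ← Finset.sum_mul, hcsum]
  -- decomposition of `σ Y Z` for `Y Z ∈ W`
  have hdecomp : ∀ Y Z : E, Y ∈ W → Z ∈ W →
      (↑(Submodule.orthogonalProjection W (σ Y Z)) : E) = σ Y Z - (L₁ * ⟪Y, Z⟫) • u := by
    intro Y Z hY hZ
    obtain ⟨D, hD⟩ : ∃ D : E,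
        D = σ Y Z - ↑(Submodule.orthogonalProjection W (σ Y Z)) - (L₁ * ⟪Y, Z⟫) • u := ⟨_, rfl⟩
    have hDK : D ∈ K := by
      rw [hD]
      refine K.sub_mem ?_ (K.smul_mem _ huK)
      have hsp := Submodule.sub_starProjection_mem_orthogonal (K := W) (σ Y Z)
      rwa [hWK] at hsp
    have hDperp : D ∈ Kᗮ := by
      rw [hKdef, Submodule.mem_orthogonal]
      have hDmem := hD
      intro v hv
      induction hv using Submodule.span_induction with
      | mem x hx =>
          obtain ⟨β, rfl⟩ := hx
          rw [real_inner_comm, hD, inner_sub_left, inner_sub_left]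
          have h1 : ⟪σ Y Z, H β⟫ = L₁ * ⟪Y, Z⟫ := by
            rw [htri, hii, inner_add_left, real_inner_smul_left, real_inner_smul_left,
              hWH hY β]
            ring
          have h2 : ⟪(↑(Submodule.orthogonalProjection W (σ Y Z)) : E), H β⟫ = 0 := by
            rw [real_inner_comm]
            exact Submodule.inner_right_of_mem_orthogonal (hHK β)
              (by rw [hWdef] at *; exact (Submodule.orthogonalProjection Kᗮ (σ Y Z)).2)
          rw [h1, h2, real_inner_smul_left, hu β]
          ring
      | zero => simp
      | add x y _ _ h1 h2 => rw [inner_add_left, h1, h2, add_zero]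
      | smul a x _ h1 => rw [real_inner_smul_left, h1, mul_zero]
    have hD0 : D = 0 := by
      have := Submodule.inner_right_of_mem_orthogonal hDK hDperp
      rwa [inner_self_eq_zero] at this
    rw [hD, sub_sub, sub_eq_zero] at hD0
    have h5 : Submodule.orthogonalProjection W ((↑(Submodule.orthogonalProjection W (σ Y Z)) : E))
        = Submodule.orthogonalProjection W (σ Y Z) := Submodule.orthogonalProjectionOnto_mem_subspace_eq_self _
    have h6 : Submodule.orthogonalProjection W u = 0 :=
      Submodule.orthogonalProjectionOnto_apply_of_mem_orthogonal (by rw [hWK]; exact huK)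
    rw [hD0, map_add, map_smul, h5, h6, smul_zero, add_zero, add_sub_cancel_right]
  constructor
  · -- part (a): trace-freeness
    intro ι _ f
    set Pc : E →ₗ[ℝ] W := (Submodule.orthogonalProjection W : E →L[ℝ] W).toLinearMap with hPc
    set Q : E →ₗ[ℝ] E := W.subtype ∘ₗ Pc with hQ
    have hQmem : ∀ x : E, x ∈ W → Q x = x := by
      intro x hx
      simp only [hQ, LinearMap.comp_apply, hPc, ContinuousLinearMap.coe_coe,
        Submodule.coe_subtype]
      exact Submodule.starProjection_eq_self_iff.mpr hx
    have hQW : ∀ x : E, Q x ∈ W := fun x => (Pc x).2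
    have hRperp : ∀ x : E, x - Q x ∈ Wᗮ := fun x =>
      Submodule.sub_starProjection_mem_orthogonal x
    have hinnerP : ∀ (v : E) (w : W),
        ⟪(↑(Submodule.orthogonalProjection W v) : E), (w:E)⟫ = ⟪v, (w:E)⟫ := by
      intro v w
      have h := Submodule.starProjection_inner_eq_zero v w w.2
      rw [inner_sub_left, sub_eq_zero] at h
      exact h.symm
    suffices hS : ∀ w : W, ⟪∑ j, Submodule.orthogonalProjection W (σ (f j : E) (f j : E)), w⟫ = 0 by
      have := hS (∑ j, Submodule.orthogonalProjection W (σ (f j : E) (f j : E)))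
      rwa [inner_self_eq_zero] at this
    intro w
    rw [sum_inner]
    have step1 : ∀ j, ⟪Submodule.orthogonalProjection W (σ (f j : E) (f j : E)), w⟫
        = ⟪σ (w : E) (f j : E), (f j : E)⟫ := by
      intro j
      rw [Submodule.coe_inner, hinnerP, htri, hsymm]
    rw [Finset.sum_congr rfl fun j _ => step1 j]
    set A : W →ₗ[ℝ] W := Pc ∘ₗ (σ (w : E)) ∘ₗ W.subtype with hA
    have step2 : ∀ j, ⟪σ (w : E) (f j : E), (f j : E)⟫ = ⟪A (f j), f j⟫ := by
      intro j
      rw [Submodule.coe_inner, hA]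
      simp only [LinearMap.comp_apply, Submodule.coe_subtype, hPc,
        ContinuousLinearMap.coe_coe]
      rw [hinnerP]
    rw [Finset.sum_congr rfl fun j _ => step2 j]
    rw [← trace_eq_sum_inner_onb f A]
    have step3 : LinearMap.trace ℝ W A = LinearMap.trace ℝ E ((σ (w : E)) ∘ₗ Q) := by
      rw [hA, LinearMap.trace_comp_comm' ((σ (w : E)) ∘ₗ W.subtype) Pc,
        LinearMap.comp_assoc]
    rw [step3]
    have hRidem : (LinearMap.id - Q) ∘ₗ (LinearMap.id - Q) = LinearMap.id - Q := by
      ext x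
      simp only [LinearMap.comp_apply, LinearMap.sub_apply, LinearMap.id_apply, map_sub]
      rw [hQmem _ (hQW x)]
      abel
    have hRzero : (LinearMap.id - Q) ∘ₗ ((σ (w : E)) ∘ₗ (LinearMap.id - Q)) = 0 := by
      ext x
      simp only [LinearMap.comp_apply, LinearMap.sub_apply, LinearMap.id_apply,
        LinearMap.zero_apply]
      have h1 : x - Q x ∈ K := by rw [← hWK]; exact hRperp x
      have h2 : σ (w : E) (x - Q x) ∈ W := hσK _ w.2 _ h1
      rw [hQmem _ h2, sub_self]
    have htr0 : LinearMap.trace ℝ E ((σ (w : E)) ∘ₗ (LinearMap.id - Q)) = 0 := by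
      calc LinearMap.trace ℝ E ((σ (w : E)) ∘ₗ (LinearMap.id - Q))
          = LinearMap.trace ℝ E
              ((σ (w : E)) ∘ₗ ((LinearMap.id - Q) ∘ₗ (LinearMap.id - Q))) := by
            rw [hRidem]
        _ = LinearMap.trace ℝ E
              (((σ (w : E)) ∘ₗ (LinearMap.id - Q)) ∘ₗ (LinearMap.id - Q)) := by
            rw [LinearMap.comp_assoc]
        _ = LinearMap.trace ℝ E
              ((LinearMap.id - Q) ∘ₗ ((σ (w : E)) ∘ₗ (LinearMap.id - Q))) := by
            rw [LinearMap.trace_comp_comm']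
        _ = 0 := by rw [hRzero, map_zero]
    have step4 : LinearMap.trace ℝ E ((σ (w : E)) ∘ₗ Q)
        = LinearMap.trace ℝ E (σ (w : E)) := by
      have hdec : (σ (w : E)) ∘ₗ Q = σ (w : E) - (σ (w : E)) ∘ₗ (LinearMap.id - Q) := by
        ext x
        simp only [LinearMap.comp_apply, LinearMap.sub_apply, LinearMap.id_apply, map_sub]
        abel
      rw [hdec, map_sub, htr0, sub_zero]
    rw [step4, trace_eq_sum_inner_onb b (σ (w : E))]
    have hHw : ∀ α, ⟪H α, (w : E)⟫ = 0 := fun α =>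
      Submodule.inner_right_of_mem_orthogonal (hHK α) (hWdef ▸ w.2)
    have step5 : ∀ i, ⟪σ (w : E) (b i), b i⟫ = ⟪σ (b i) (b i), (w : E)⟫ := by
      intro i
      rw [hsymm, ← htri]
    rw [Finset.sum_congr rfl fun i _ => step5 i, ← sum_inner, hiv]
    simp [sum_inner, real_inner_smul_left, hHw]
  · -- part (b): the Gauss equation
    intro X Y Z hX hY hZ
    have key : ∀ A B : E, A ∈ W → B ∈ W →
        (↑(Submodule.orthogonalProjection W (σ A ((Submodule.orthogonalProjection W (σ B Z)) : E))) : E)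
          = ↑(Submodule.orthogonalProjection W (σ A (σ B Z)))
            + (L₁ * ⟪B, Z⟫ * ((NR + s) / r)) • A := by
      intro A B hA hB
      rw [hdecomp B Z hB hZ, map_sub, map_smul, hσu A hA, map_sub, map_smul, map_smul]
      have hPA : (↑(Submodule.orthogonalProjection W A) : E) = A :=
        (Submodule.starProjection_eq_self_iff.mpr hA)
      push_cast [Submodule.coe_sub, Submodule.coe_smul, hPA]
      module
    rw [key X Y hX hY, key Y X hY hX]
    have hsub : (↑(Submodule.orthogonalProjection W (σ X (σ Y Z))) : E)
        - ↑(Submodule.orthogonalProjection W (σ Y (σ X Z)))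
        = L₁ • (⟪Y, Z⟫ • X - ⟪X, Z⟫ • Y) := by
      rw [← Submodule.coe_sub, ← map_sub, hiii X Y Z]
      have hv : L₁ • (⟪Y, Z⟫ • X - ⟪X, Z⟫ • Y) ∈ W :=
        Submodule.smul_mem _ _ (Submodule.sub_mem _ (Submodule.smul_mem _ _ hX)
          (Submodule.smul_mem _ _ hY))
      exact Submodule.starProjection_eq_self_iff.mpr hv
    have hgoal : (↑(Submodule.orthogonalProjection W (σ X (σ Y Z))) : E)
        + (L₁ * ⟪Y, Z⟫ * ((NR + s) / r)) • X
        - (↑(Submodule.orthogonalProjection W (σ Y (σ X Z))) + (L₁ * ⟪X, Z⟫ * ((NR + s) / r)) • Y)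
        = L₁ • (⟪Y, Z⟫ • X - ⟪X, Z⟫ • Y)
          + (L₁ * ((NR + s) / r)) • (⟪Y, Z⟫ • X - ⟪X, Z⟫ • Y) := by
      rw [← hsub]
      module
    rw [hgoal, ← add_smul]
    congr 1
    have hC : ((((Module.finrank ℝ E + ∑ α, nn α : ℕ) : ℝ)) + 1)
        = mR + NR + 1 := by
      push_cast [hmR, hNR]
      ring
    rw [hC]
    have hr' : (Module.finrank ℝ W : ℝ) + 1 = r := hrdef.symm
    rw [hr']
    have hmN : mR + NR + 1 = r + NR + s := by rw [hrdef, hrank]; ring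
    rw [hmN]
    field_simp
    ring

/-- Lemma 3.2 of the paper: the block `σ_W(X,Y) := P_W(σ(X,Y))` of the second
fundamental form on `W = ℋ^⊥` is trace-free and satisfies the flat Gauss
equation with constant `(n+1)·L₁/r`. -/
theorem sigma_W_tracefree_and_gauss
    {E : Type*} [NormedAddCommGroup E] [InnerProductSpace ℝ E]
    [FiniteDimensional ℝ E]
    (s : ℕ) (hs : 1 ≤ s) (L₁ : ℝ) (hL : L₁ < 0)
    (nn : Fin s → ℕ) (hnn : ∀ α, 0 < nn α)
    (H : Fin s → E) (hind : LinearIndependent ℝ H)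
    (hHL : ∀ α β, α ≠ β → ⟪H α, H β⟫ = L₁)
    (σ : E →ₗ[ℝ] E →ₗ[ℝ] E)
    (hsymm : ∀ X Y : E, σ X Y = σ Y X)
    (htri : ∀ X Y Z : E, ⟪σ X Y, Z⟫ = ⟪σ X Z, Y⟫)
    (hii : ∀ (X : E) (α : Fin s), σ X (H α) = ⟪X, H α⟫ • H α + L₁ • X)
    (hiii : ∀ X Y Z : E, σ X (σ Y Z) - σ Y (σ X Z) =
      L₁ • (⟪Y, Z⟫ • X - ⟪X, Z⟫ • Y))
    (b : OrthonormalBasis (Fin (Module.finrank ℝ E)) ℝ E)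
    (hiv : ∑ i, σ (b i) (b i) = -∑ α, (nn α : ℝ) • H α)
    (hW : 1 ≤ Module.finrank ℝ ((Submodule.span ℝ (Set.range H))ᗮ)) :
    (∀ (ι : Type) (_ : Fintype ι)
        (f : OrthonormalBasis ι ℝ ((Submodule.span ℝ (Set.range H))ᗮ)),
      ∑ j, Submodule.orthogonalProjection ((Submodule.span ℝ (Set.range H))ᗮ)
          (σ (f j : E) (f j : E)) = 0) ∧
    (∀ X Y Z : E, X ∈ (Submodule.span ℝ (Set.range H))ᗮ →
      Y ∈ (Submodule.span ℝ (Set.range H))ᗮ →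
      Z ∈ (Submodule.span ℝ (Set.range H))ᗮ →
      (Submodule.orthogonalProjection ((Submodule.span ℝ (Set.range H))ᗮ)
          (σ X ((Submodule.orthogonalProjection ((Submodule.span ℝ (Set.range H))ᗮ)
            (σ Y Z) : E))) : E) -
      (Submodule.orthogonalProjection ((Submodule.span ℝ (Set.range H))ᗮ)
          (σ Y ((Submodule.orthogonalProjection ((Submodule.span ℝ (Set.range H))ᗮ)
            (σ X Z) : E))) : E) =
        ((((Module.finrank ℝ E + ∑ α, nn α : ℕ) : ℝ) + 1) * L₁ /
            ((Module.finrank ℝ ((Submodule.span ℝ (Set.range H))ᗮ) : ℝ) + 1)) •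
          (⟪Y, Z⟫ • X - ⟪X, Z⟫ • Y)) :=
  sigma_W_aux s hs L₁ hL nn hnn H hind hHL σ hsymm htri hii hiii b hiv
    (Submodule.span ℝ (Set.range H)) rfl _ rfl hW
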